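/- Let n ≥ 2, s₀ > 0, C ≥ 0, and let τ̊ : (0, s₀] → ℝ be continuous with |τ̊(s) − (n−1)/s| ≤ C·s for all s ∈ (0, s₀]. Let R₁ ∈ [−∞, ∞), r₀ ∈ ℝ, and let φ : (0, s₀] → (R₁, r₀] be a continuously differentiable bijection with φ′(s) > 0 for all s, and define τ : (R₁, r₀] → ℝ by τ(φ(s)) := τ̊(s)/φ′(s). Then the improper integral of τ over (R₁, r₀] diverges: lim_{ρ → R₁⁺} ∫_{ρ}^{r₀} τ(r) dr = +∞. -/

import Mathlib

open Set Filter Topology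
open MeasureTheory intervalIntegral

/-- For a regular light-cone expansion `τ̊(s) = (n−1)/s + O(s)` in an affine parameter `s`
and any orientation-preserving reparameterisation `r = φ(s)` onto `(R₁, r₀]`, the
transformed expansion `τ(φ(s)) = τ̊(s)/φ′(s)` has divergent integral:
`∫_ρ^{r₀} τ → +∞` as `ρ → R₁⁺`. -/
theorem integral_of_expansion_diverges (n : ℕ) (hn : 2 ≤ n)
    (s₀ C : ℝ) (hs₀ : 0 < s₀) (hC : 0 ≤ C)
    (τO : ℝ → ℝ) (hτOc : ContinuousOn τO (Ioc 0 s₀))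
    (hτOb : ∀ s ∈ Ioc 0 s₀, |τO s - ((n:ℝ)-1)/s| ≤ C * s)
    (R₁ : EReal) (r₀ : ℝ) (hR₁ : R₁ < (r₀ : EReal))
    (J : Set ℝ) (hJ : J = {x : ℝ | R₁ < (x : EReal) ∧ x ≤ r₀})
    (φ φ' : ℝ → ℝ)
    (hbij : Set.BijOn φ (Ioc 0 s₀) J)
    (hφ' : ∀ s ∈ Ioc 0 s₀, HasDerivWithinAt φ (φ' s) (Ioc 0 s₀) s)
    (hφ'c : ContinuousOn φ' (Ioc 0 s₀))
    (hφ'pos : ∀ s ∈ Ioc 0 s₀, 0 < φ' s)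
    (τ : ℝ → ℝ) (hτ : ∀ s ∈ Ioc 0 s₀, τ (φ s) = τO s / φ' s) :
    Tendsto (fun ρ : ℝ => ∫ x in ρ..r₀, τ x)
      (comap (fun x : ℝ => (x : EReal)) (𝓝[>] R₁)) atTop := by
  have hone : (1:ℝ) ≤ (n:ℝ) - 1 := by
    have : (2:ℝ) ≤ (n:ℝ) := by exact_mod_cast hn
    linarith
  -- continuity of φ
  have hφc : ContinuousOn φ (Ioc 0 s₀) := fun s hs => (hφ' s hs).continuousWithinAt
  have hder : ∀ x ∈ Ioo 0 s₀, HasDerivAt φ (φ' x) x := by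
    intro x hx
    have hmem : Ioc 0 s₀ ∈ 𝓝 x :=
      mem_nhds_iff.2 ⟨Ioo 0 s₀, Ioo_subset_Ioc_self, isOpen_Ioo, hx⟩
    exact (hφ' x (Ioo_subset_Ioc_self hx)).hasDerivAt hmem
  have hmono : StrictMonoOn φ (Ioc 0 s₀) := by
    apply strictMonoOn_of_hasDerivWithinAt_pos (convex_Ioc 0 s₀) hφc
    · intro x hx
      rw [interior_Ioc] at hx ⊢
      exact (hder x hx).hasDerivWithinAt
    · intro x hx
      rw [interior_Ioc] at hx
      exact hφ'pos x (Ioo_subset_Ioc_self hx)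
  have hs₀mem : s₀ ∈ Ioc 0 s₀ := ⟨hs₀, le_refl _⟩
  have hr₀J : r₀ ∈ J := by rw [hJ]; exact ⟨hR₁, le_refl _⟩
  have hφmax : φ s₀ = r₀ := by
    obtain ⟨t, ht, hft⟩ := hbij.surjOn hr₀J
    have h1 : φ s₀ ≤ r₀ := by
      have := hbij.mapsTo hs₀mem; rw [hJ] at this; exact this.2
    have h2 : φ t ≤ φ s₀ := (hmono.le_iff_le ht hs₀mem).2 ht.2
    rw [hft] at h2
    exact le_antisymm h1 h2
  -- inverse function
  set ψ := Function.invFunOn φ (Ioc 0 s₀) with hψdef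
  have hinv : InvOn ψ φ (Ioc 0 s₀) J := hbij.invOn_invFunOn
  have hψmaps : MapsTo ψ J (Ioc 0 s₀) := by
    intro y hy
    obtain ⟨t, ht, hft⟩ := hbij.surjOn hy
    rw [← hft, hinv.1 ht]; exact ht
  have hψbij : BijOn ψ J (Ioc 0 s₀) := hinv.symm.bijOn hψmaps hbij.mapsTo
  have hψmono : MonotoneOn ψ J := by
    intro y₁ h₁ y₂ h₂ hle
    by_contra hlt
    push_neg at hlt
    have := hmono (hψmaps h₂) (hψmaps h₁) hlt
    rw [hinv.2 h₁, hinv.2 h₂] at this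
    exact absurd this (not_lt.2 hle)
  set g₀ : ℝ → ℝ := fun s => τO s / φ' s with hg₀def
  have hg₀c : ContinuousOn g₀ (Ioc 0 s₀) :=
    hτOc.div hφ'c (fun s hs => (hφ'pos s hs).ne')
  -- key: change of variables
  have key : ∀ σ ∈ Ioo 0 s₀, ∫ x in (φ σ)..r₀, τ x = ∫ s in σ..s₀, τO s := by
    intro σ hσ
    have hσIoc : σ ∈ Ioc 0 s₀ := Ioo_subset_Ioc_self hσ
    have hle : σ ≤ s₀ := hσ.2.le
    have hsub : Icc σ s₀ ⊆ Ioc 0 s₀ := fun x hx => ⟨lt_of_lt_of_le hσ.1 hx.1, hx.2⟩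
    have hsub' : Ioo σ s₀ ⊆ Ioc 0 s₀ := fun x hx => ⟨lt_trans hσ.1 hx.1, hx.2.le⟩
    have hab : φ σ < φ s₀ := hmono hσIoc hs₀mem hσ.2
    have himIcc : φ '' Icc σ s₀ = Icc (φ σ) (φ s₀) := by
      apply Subset.antisymm
      · rintro _ ⟨t, ht, rfl⟩
        exact ⟨(hmono.le_iff_le hσIoc (hsub ht)).2 ht.1,
          (hmono.le_iff_le (hsub ht) hs₀mem).2 ht.2⟩
      · exact intermediate_value_Icc hle (hφc.mono hsub)
    have himIoo : φ '' Ioo σ s₀ = Ioo (φ σ) (φ s₀) := by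
      apply Subset.antisymm
      · rintro _ ⟨t, ht, rfl⟩
        exact ⟨hmono hσIoc (hsub' ht) ht.1, hmono (hsub' ht) hs₀mem ht.2⟩
      · intro y hy
        have hy' : y ∈ φ '' Icc σ s₀ := by rw [himIcc]; exact Ioo_subset_Icc_self hy
        obtain ⟨t, ht, rfl⟩ := hy'
        refine ⟨t, ⟨?_, ?_⟩, rfl⟩
        · rcases eq_or_lt_of_le ht.1 with h | h
          · exact absurd hy.1 (by rw [h]; exact lt_irrefl _)
          · exact h
        · rcases eq_or_lt_of_le ht.2 with h | h
          · exact absurd hy.2 (by rw [h]; exact lt_irrefl _)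
          · exact h
    have hJsub : Icc (φ σ) (φ s₀) ⊆ J := by
      intro x hx
      have haJ : φ σ ∈ J := hbij.mapsTo hσIoc
      rw [hJ] at haJ ⊢
      refine ⟨lt_of_lt_of_le haJ.1 ?_, ?_⟩
      · exact_mod_cast hx.1
      · rw [← hφmax]; exact hx.2
    have hψmem : ∀ y ∈ Ioo (φ σ) (φ s₀), ψ y ∈ Ioo σ s₀ := by
      intro y hy
      rw [← himIoo] at hy
      obtain ⟨t, ht, rfl⟩ := hy
      rwa [hinv.1 (hsub' ht)]
    have hτeq : EqOn τ (g₀ ∘ ψ) (Ioo (φ σ) (φ s₀)) := by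
      intro y hy
      have hyJ : y ∈ J := hJsub (Ioo_subset_Icc_self hy)
      have h2 : φ (ψ y) = y := hinv.2 hyJ
      calc τ y = τ (φ (ψ y)) := by rw [h2]
        _ = τO (ψ y) / φ' (ψ y) := hτ _ (hψmaps hyJ)
        _ = (g₀ ∘ ψ) y := rfl
    have hψcont : ContinuousOn ψ (Ioo (φ σ) (φ s₀)) := by
      intro y hy
      apply ContinuousAt.continuousWithinAt
      apply continuousAt_of_monotoneOn_of_image_mem_nhds hψmono
      · exact mem_nhds_iff.2 ⟨Ioo (φ σ) (φ s₀),
          fun z hz => hJsub (Ioo_subset_Icc_self hz), isOpen_Ioo, hy⟩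
      · rw [hψbij.image_eq]
        have := hψmem y hy
        exact mem_nhds_iff.2 ⟨Ioo 0 s₀, Ioo_subset_Ioc_self, isOpen_Ioo,
          ⟨lt_trans hσ.1 this.1, this.2⟩⟩
    have hτcont : ContinuousOn τ (Ioo (φ σ) (φ s₀)) := by
      refine ContinuousOn.congr ?_ hτeq
      exact hg₀c.comp hψcont (fun y hy => hsub' (hψmem y hy))
    obtain ⟨B, hB⟩ := (isCompact_Icc (a := σ) (b := s₀)).exists_bound_of_continuousOn
      (hg₀c.mono hsub)
    have hg1 : IntegrableOn τ (φ '' Icc σ s₀) := by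
      rw [himIcc, integrableOn_Icc_iff_integrableOn_Ioo]
      have hconst : IntegrableOn (fun _ : ℝ => B) (Ioo (φ σ) (φ s₀)) :=
        integrableOn_const measure_Ioo_lt_top.ne
      refine Integrable.mono' hconst (hτcont.aestronglyMeasurable measurableSet_Ioo) ?_
      rw [ae_restrict_iff' measurableSet_Ioo]
      refine ae_of_all _ fun y hy => ?_
      rw [hτeq hy]
      exact hB (ψ y) (Ioo_subset_Icc_self (hψmem y hy))
    have heqτO : EqOn (fun x => φ' x • (τ ∘ φ) x) τO (Icc σ s₀) := by
      intro x hx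
      have hx' := hsub hx
      simp only [Function.comp, smul_eq_mul]
      rw [hτ x hx', mul_comm, div_mul_cancel₀ _ (hφ'pos x hx').ne']
    have hg2 : IntegrableOn (fun x => φ' x • (τ ∘ φ) x) (Icc σ s₀) :=
      ((hτOc.mono hsub).integrableOn_Icc).congr_fun heqτO.symm measurableSet_Icc
    have hcov := intervalIntegral.integral_comp_smul_deriv''' (a := σ) (b := s₀)
      (f := φ) (f' := φ') (g := τ)
      (by rw [uIcc_of_le hle]; exact hφc.mono hsub)
      (by
        rw [min_eq_left hle, max_eq_right hle]
        intro x hx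
        exact (hder x ⟨lt_trans hσ.1 hx.1, hx.2⟩).hasDerivWithinAt)
      (by rw [min_eq_left hle, max_eq_right hle, himIoo]; exact hτcont)
      (by rw [uIcc_of_le hle]; exact hg1)
      (by rw [uIcc_of_le hle]; exact hg2)
    rw [← hφmax, ← hcov]
    apply intervalIntegral.integral_congr
    rw [uIcc_of_le hle]
    exact heqτO
  -- lower bound on ∫ τO
  have lower : ∀ σ ∈ Ioo 0 s₀,
      ((n:ℝ)-1) * (Real.log s₀ - Real.log σ) - C * s₀^2/2 ≤ ∫ s in σ..s₀, τO s := by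
    intro σ hσ
    have hle : σ ≤ s₀ := hσ.2.le
    have hsub : Icc σ s₀ ⊆ Ioc 0 s₀ := fun x hx => ⟨lt_of_lt_of_le hσ.1 hx.1, hx.2⟩
    have h0 : (0:ℝ) ∉ uIcc σ s₀ := by
      rw [uIcc_of_le hle]
      intro h
      exact absurd h.1 (not_le.2 hσ.1)
    have hc1 : ContinuousOn (fun s : ℝ => ((n:ℝ)-1)/s) (uIcc σ s₀) := by
      apply ContinuousOn.div continuousOn_const continuousOn_id
      intro x hx h
      exact h0 (h ▸ hx)
    have hc2 : ContinuousOn (fun s : ℝ => C * s) (uIcc σ s₀) :=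
      (continuous_const.mul continuous_id).continuousOn
    have hi1 : IntervalIntegrable (fun s : ℝ => ((n:ℝ)-1)/s) MeasureTheory.volume σ s₀ :=
      hc1.intervalIntegrable
    have hi2 : IntervalIntegrable (fun s : ℝ => C * s) MeasureTheory.volume σ s₀ :=
      hc2.intervalIntegrable
    have hiτ : IntervalIntegrable τO MeasureTheory.volume σ s₀ :=
      (hτOc.mono (by rw [uIcc_of_le hle]; exact hsub)).intervalIntegrable
    have hpt : ∀ x ∈ Icc σ s₀, ((n:ℝ)-1)/x - C*x ≤ τO x := by
      intro x hx
      have h := abs_le.1 (hτOb x (hsub hx))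
      linarith [h.1]
    have hmono' := intervalIntegral.integral_mono_on hle (hi1.sub hi2) hiτ hpt
    have hsplit : ∫ x in σ..s₀, (((n:ℝ)-1)/x - C*x)
        = (∫ x in σ..s₀, ((n:ℝ)-1)/x) - ∫ x in σ..s₀, C*x :=
      intervalIntegral.integral_sub hi1 hi2
    have hint1 : ∫ x in σ..s₀, ((n:ℝ)-1)/x = ((n:ℝ)-1) * (Real.log s₀ - Real.log σ) := by
      have : ∀ x : ℝ, ((n:ℝ)-1)/x = ((n:ℝ)-1) * (1/x) := fun x => by ring
      simp_rw [this]
      rw [intervalIntegral.integral_const_mul, integral_one_div h0,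
        Real.log_div (ne_of_gt hs₀) (ne_of_gt hσ.1)]
    have hint2 : ∫ x in σ..s₀, C*x = C * ((s₀^2 - σ^2)/2) := by
      rw [intervalIntegral.integral_const_mul, integral_id]
    have hσ2 : 0 ≤ C * σ^2 := by positivity
    calc ((n:ℝ)-1) * (Real.log s₀ - Real.log σ) - C * s₀^2/2
        ≤ ((n:ℝ)-1) * (Real.log s₀ - Real.log σ) - C * ((s₀^2 - σ^2)/2) := by linarith
      _ = ∫ x in σ..s₀, (((n:ℝ)-1)/x - C*x) := by rw [hsplit, hint1, hint2]
      _ ≤ ∫ s in σ..s₀, τO s := hmono'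
  -- final filter argument
  rw [tendsto_atTop]
  intro M
  set A := |M| + C * s₀^2/2 + 1 with hA
  have hApos : 0 < A := by positivity
  set ε := s₀ * Real.exp (-A) with hε
  have hε0 : 0 < ε := by positivity
  have hεlt : ε < s₀ := by
    have h1 : Real.exp (-A) < 1 := Real.exp_lt_one_iff.2 (neg_lt_zero.2 hApos)
    nlinarith
  have hεIoc : ε ∈ Ioc 0 s₀ := ⟨hε0, hεlt.le⟩
  clear_value A ε
  have hφεJ : φ ε ∈ J := hbij.mapsTo hεIoc
  rw [hJ] at hφεJ
  have hmem : (fun x : ℝ => (x : EReal)) ⁻¹' (Ioc R₁ ((φ ε : ℝ) : EReal))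
      ∈ comap (fun x : ℝ => (x : EReal)) (𝓝[>] R₁) :=
    preimage_mem_comap (Ioc_mem_nhdsGT_of_mem ⟨le_refl _, hφεJ.1⟩)
  filter_upwards [hmem] with ρ hρ
  obtain ⟨hρ1, hρ2⟩ := hρ
  have hρle : ρ ≤ φ ε := by
    have h2' : (ρ : EReal) ≤ ((φ ε : ℝ) : EReal) := hρ2
    exact_mod_cast h2'
  have hρJ : ρ ∈ J := by rw [hJ]; exact ⟨hρ1, hρle.trans hφεJ.2⟩
  obtain ⟨σ, hσIoc, hφσ⟩ := hbij.surjOn hρJ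
  have hσε : σ ≤ ε := by
    have h : φ σ ≤ φ ε := by rw [hφσ]; exact hρle
    exact (hmono.le_iff_le hσIoc hεIoc).1 h
  have hσIoo : σ ∈ Ioo 0 s₀ := ⟨hσIoc.1, lt_of_le_of_lt hσε hεlt⟩
  rw [← hφσ, key σ hσIoo]
  refine le_trans ?_ (lower σ hσIoo)
  have hlog : Real.log σ ≤ Real.log ε := Real.log_le_log hσIoc.1 hσε
  have hlogε : Real.log ε = Real.log s₀ - A := by
    rw [hε, Real.log_mul (ne_of_gt hs₀) (Real.exp_ne_zero _), Real.log_exp]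
    ring
  have h3 : A ≤ Real.log s₀ - Real.log σ := by linarith
  have hx : 0 ≤ Real.log s₀ - Real.log σ := le_trans hApos.le h3
  have h2 : (1:ℝ) * (Real.log s₀ - Real.log σ) ≤ ((n:ℝ)-1) * (Real.log s₀ - Real.log σ) :=
    mul_le_mul_of_nonneg_right hone hx
  have hM := le_abs_self M
  rw [one_mul] at h2
  calc M ≤ |M| + 1 := by linarith
    _ = A - C * s₀^2/2 := by rw [hA]; ring
    _ ≤ (Real.log s₀ - Real.log σ) - C * s₀^2/2 := by linarith
    _ ≤ ((n:ℝ)-1) * (Real.log s₀ - Real.log σ) - C * s₀^2/2 := by linarith
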